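/- Let p be an odd prime, r ≥ 3 with ℓ = 2⌊r/3⌋, and let χ be a primitive Dirichlet character mod p^r. Then for any integers m, m', q, n, q' with p ∤ m and p ∤ (n + q'), the sum 𝒜 = Σ*_{α mod p^ℓ} χ̄(m − α p^{r−ℓ}) χ(m' + α q (n+q')^{-1} p^{r−ℓ}) satisfies |𝒜| ≤ p^{ℓ/2} · #{α₂ mod p^{ℓ/2} : p ∤ A(α₂), p^{ℓ/2} | b·C(α₂)}, where Σ* denotes summation over α coprime to p, and A, C are the explicit functions defined by A(α₂) = m'·(m − α₂p^{r−ℓ})^{-1} + q(n+q')^{-1} α₂ p^{r−ℓ}(m − α₂p^{r−ℓ})^{-1}, B(α₂) = m'((m−α₂p^{r−ℓ})^{-1})² + q(n+q')^{-1}(m−α₂p^{r−ℓ})^{-1}, C(α₂) = A(α₂)^{-1}B(α₂), and b is the integer with χ(1+Cα₁p^{2(r−ℓ)}) = e(α₁ b C/p^{ℓ/2}). -/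

import Mathlib

open scoped BigOperators Real
open Classical

lemma one_add_sq_zero_pow {R : Type*} [CommRing R] (x : R) (hx : x ^ 2 = 0) (n : ℕ) :
    (1 + x) ^ n = 1 + (n : R) * x := by
  induction n with
  | zero => simp
  | succ k ih =>
    have : (1 + (k : R) * x) * (1 + x) = 1 + ((k : R) + 1) * x + (k : R) * x ^ 2 := by ring
    rw [pow_succ, ih, this, hx]
    push_cast
    ring

lemma sum_range_mul_split {M : Type*} [AddCommMonoid M] (a b : ℕ) (ha : 0 < a) (f : ℕ → M) :
    ∑ x ∈ Finset.range (a * b), f x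
      = ∑ j ∈ Finset.range a, ∑ i ∈ Finset.range b, f (j + i * a) := by
  rw [← Finset.sum_product']
  apply Finset.sum_nbij' (fun x => (x % a, x / a)) (fun x => x.1 + x.2 * a)
  · intro x hx
    simp only [Finset.mem_range] at hx ⊢
    simp only [Finset.mem_product, Finset.mem_range]
    exact ⟨Nat.mod_lt _ ha, (Nat.div_lt_iff_lt_mul ha).mpr (by rw [Nat.mul_comm b a]; exact hx)⟩
  · intro x hx
    simp only [Finset.mem_product, Finset.mem_range] at hx
    simp only [Finset.mem_range]
    calc x.1 + x.2 * a < a + x.2 * a := by omega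
    _ = (x.2 + 1) * a := by ring
    _ ≤ b * a := Nat.mul_le_mul_right a (by omega)
    _ = a * b := Nat.mul_comm _ _
  · intro x hx; simp [Nat.mod_add_div']
  · intro x hx
    simp only [Finset.mem_product, Finset.mem_range] at hx
    simp [Nat.add_mul_mod_self_right, Nat.mod_eq_of_lt hx.1, Nat.add_mul_div_right _ _ ha,
      Nat.div_eq_of_lt hx.1]
  · intro x hx; rw [Nat.mod_add_div' x a]

lemma zmod_isUnit_iff_cast (p r : ℕ) (hp : p.Prime) (hr : r ≠ 0) [NeZero (p ^ r)]
    (z : ZMod (p ^ r)) :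
    IsUnit z ↔ ZMod.castHom (dvd_pow_self p hr) (ZMod p) z ≠ 0 := by
  have hz : z = ((z.val : ℕ) : ZMod (p ^ r)) := (ZMod.natCast_rightInverse z).symm
  rw [ZMod.castHom_apply]
  haveI : NeZero p := ⟨hp.pos.ne'⟩
  rw [show (ZMod.cast z : ZMod p) = ((z.val : ℕ) : ZMod p) from (ZMod.natCast_val z).symm]
  rw [Ne, ZMod.natCast_eq_zero_iff]
  conv_lhs => rw [hz]
  rw [ZMod.isUnit_iff_coprime]
  rw [Nat.coprime_pow_right_iff (Nat.pos_of_ne_zero hr)]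
  rw [Nat.coprime_comm]
  exact hp.coprime_iff_not_dvd

theorem stmt_8 (p r ℓ : ℕ) (hp : p.Prime) (hodd : p ≠ 2) (hr : 3 ≤ r)
    (hℓ : ℓ = 2 * (r / 3)) [NeZero (p ^ r)]
    (χ : DirichletCharacter ℂ (p ^ r)) (hχ : χ.IsPrimitive)
    (m m' q n q' : ℤ) (hm : ¬ (p : ℤ) ∣ m) (hnq : ¬ (p : ℤ) ∣ (n + q'))
    (A B C : ℤ → ZMod (p ^ r))
    (hA : ∀ α₂ : ℤ, A α₂ =
      (m' : ZMod (p ^ r)) * ((m : ZMod (p ^ r)) - (α₂ : ZMod (p ^ r)) * (p : ZMod (p ^ r)) ^ (r - ℓ))⁻¹ +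
        (q : ZMod (p ^ r)) * (((n + q' : ℤ) : ZMod (p ^ r)))⁻¹ * (α₂ : ZMod (p ^ r)) *
          (p : ZMod (p ^ r)) ^ (r - ℓ) *
          ((m : ZMod (p ^ r)) - (α₂ : ZMod (p ^ r)) * (p : ZMod (p ^ r)) ^ (r - ℓ))⁻¹)
    (hB : ∀ α₂ : ℤ, B α₂ =
      (m' : ZMod (p ^ r)) *
          (((m : ZMod (p ^ r)) - (α₂ : ZMod (p ^ r)) * (p : ZMod (p ^ r)) ^ (r - ℓ))⁻¹) ^ 2 +
        (q : ZMod (p ^ r)) * (((n + q' : ℤ) : ZMod (p ^ r)))⁻¹ *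
          ((m : ZMod (p ^ r)) - (α₂ : ZMod (p ^ r)) * (p : ZMod (p ^ r)) ^ (r - ℓ))⁻¹)
    (hC : ∀ α₂ : ℤ, C α₂ = (A α₂)⁻¹ * B α₂)
    (b : ℤ → ℤ)
    (hb : ∀ α₂ α₁ : ℤ, χ (1 + C α₂ * (α₁ : ZMod (p ^ r)) * (p : ZMod (p ^ r)) ^ (2 * (r - ℓ))) =
      Complex.exp (2 * π * Complex.I * α₁ * (b α₂) * ((C α₂).val : ℂ) / ((p ^ (ℓ / 2) : ℕ) : ℂ))) :
    ‖(∑ α ∈ (Finset.range (p ^ ℓ)).filter (fun α => Nat.Coprime α p),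
        star (χ ((m : ZMod (p ^ r)) - (α : ZMod (p ^ r)) * (p : ZMod (p ^ r)) ^ (r - ℓ))) *
          χ ((m' : ZMod (p ^ r)) + (α : ZMod (p ^ r)) * (q : ZMod (p ^ r)) *
            (((n + q' : ℤ) : ZMod (p ^ r)))⁻¹ * (p : ZMod (p ^ r)) ^ (r - ℓ)))‖ ≤
      (p ^ (ℓ / 2) : ℕ) *
        ((Finset.range (p ^ (ℓ / 2))).filter (fun α₂ : ℕ =>
          IsUnit (A (α₂ : ℤ)) ∧ ((p : ℤ) ^ (ℓ / 2)) ∣ (b (α₂ : ℤ) * ((C (α₂ : ℤ)).val : ℤ)))).card := by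
  classical
  haveI : Fact p.Prime := ⟨hp⟩
  set L := r / 3 with hLdef
  have hL2 : ℓ / 2 = L := by omega
  have hL1 : 1 ≤ L := by omega
  have hℓr : ℓ + 1 ≤ r := by omega
  have h3L : 3 * L ≤ r := by omega
  have hr0 : r ≠ 0 := by omega
  -- vanishing of high powers of p
  have hzero : ∀ k : ℕ, r ≤ k → ((p : ZMod (p ^ r))) ^ k = 0 := by
    intro k hk
    have : ((p ^ k : ℕ) : ZMod (p ^ r)) = 0 :=
      (ZMod.natCast_eq_zero_iff _ _).mpr (pow_dvd_pow p hk)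
    push_cast at this
    exact this
  set s := r - ℓ + L with hsdef
  set d := r - ℓ - L with hddef
  set φ := ZMod.castHom (dvd_pow_self p hr0) (ZMod p) with hφdef
  have hUnit : ∀ z : ZMod (p ^ r), IsUnit z ↔ φ z ≠ 0 := fun z => zmod_isUnit_iff_cast p r hp hr0 z
  have hφp : φ ((p : ZMod (p ^ r))) = 0 := by
    rw [map_natCast]
    exact ZMod.natCast_self p
  have hφX : φ ((p : ZMod (p ^ r)) ^ (r - ℓ)) = 0 := by
    rw [map_pow, hφp, zero_pow (by omega)]
  have hunit : ∀ z0 : ZMod (p ^ r), IsUnit ((m : ZMod (p ^ r)) - z0 * (p : ZMod (p ^ r)) ^ (r - ℓ)) := by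
    intro z0
    rw [hUnit]
    rw [map_sub, map_mul, hφX, mul_zero, sub_zero, map_intCast]
    rw [Ne, ZMod.intCast_zmod_eq_zero_iff_dvd]
    exact hm
  set w : ZMod (p ^ r) := (((n + q' : ℤ) : ZMod (p ^ r)))⁻¹ with hwdef
  -- the main algebraic identity
  have halg : ∀ jj ii : ℕ, IsUnit (A (jj : ℤ)) →
      ((m' : ZMod (p ^ r)) + ((jj + ii * p ^ L : ℕ) : ZMod (p ^ r)) * (q : ZMod (p ^ r)) * w * (p : ZMod (p ^ r)) ^ (r - ℓ)) =
        ((m : ZMod (p ^ r)) - ((jj + ii * p ^ L : ℕ) : ZMod (p ^ r)) * (p : ZMod (p ^ r)) ^ (r - ℓ)) *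
          (A (jj : ℤ) * (1 + C (jj : ℤ) * (ii : ZMod (p ^ r)) * (p : ZMod (p ^ r)) ^ s)) := by
    intro jj ii hAu
    have hAj := hA (jj : ℤ)
    have hBj := hB (jj : ℤ)
    have hCj := hC (jj : ℤ)
    have hACj : A (jj : ℤ) * C (jj : ℤ) = B (jj : ℤ) := by
      rw [hCj, ← mul_assoc, ZMod.mul_inv_of_unit _ hAu, one_mul]
    rw [hBj] at hACj
    push_cast at hAj hACj ⊢
    have hv : ((m : ZMod (p ^ r)) - (jj : ZMod (p ^ r)) * (p : ZMod (p ^ r)) ^ (r - ℓ)) *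
        ((m : ZMod (p ^ r)) - (jj : ZMod (p ^ r)) * (p : ZMod (p ^ r)) ^ (r - ℓ))⁻¹ = 1 :=
      ZMod.mul_inv_of_unit _ (hunit _)
    have hzz : (p : ZMod (p ^ r)) ^ (r - ℓ) * (p : ZMod (p ^ r)) ^ (r - ℓ) * (p : ZMod (p ^ r)) ^ L = 0 := by
      rw [← pow_add, ← pow_add]
      exact hzero _ (by omega)
    have hs : (p : ZMod (p ^ r)) ^ s = (p : ZMod (p ^ r)) ^ (r - ℓ) * (p : ZMod (p ^ r)) ^ L := by
      rw [hsdef, pow_add]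
    rw [hs]
    linear_combination
      (-((m : ZMod (p ^ r)) - (jj : ZMod (p ^ r)) * (p : ZMod (p ^ r)) ^ (r - ℓ) - (ii : ZMod (p ^ r)) * ((p : ZMod (p ^ r)) ^ (r - ℓ) * (p : ZMod (p ^ r)) ^ L))) * hAj
      + (-((m : ZMod (p ^ r)) - (jj : ZMod (p ^ r)) * (p : ZMod (p ^ r)) ^ (r - ℓ)) * (ii : ZMod (p ^ r)) * ((p : ZMod (p ^ r)) ^ (r - ℓ) * (p : ZMod (p ^ r)) ^ L)) * hACj
      + (-((m' : ZMod (p ^ r)) + (q : ZMod (p ^ r)) * w * (jj : ZMod (p ^ r)) * (p : ZMod (p ^ r)) ^ (r - ℓ)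
          + (ii : ZMod (p ^ r)) * ((p : ZMod (p ^ r)) ^ (r - ℓ) * (p : ZMod (p ^ r)) ^ L) *
            ((m' : ZMod (p ^ r)) * ((m : ZMod (p ^ r)) - (jj : ZMod (p ^ r)) * (p : ZMod (p ^ r)) ^ (r - ℓ))⁻¹ + (q : ZMod (p ^ r)) * w))) * hv
      + ((q : ZMod (p ^ r)) * w * (jj : ZMod (p ^ r)) * ((m : ZMod (p ^ r)) - (jj : ZMod (p ^ r)) * (p : ZMod (p ^ r)) ^ (r - ℓ))⁻¹ * (ii : ZMod (p ^ r))
          + (ii : ZMod (p ^ r)) ^ 2 * (p : ZMod (p ^ r)) ^ L * (A (jj : ℤ) * C (jj : ℤ))) * hzz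
  -- nonunit case
  have hnonunit : ∀ jj ii : ℕ, ¬ IsUnit (A (jj : ℤ)) →
      χ ((m' : ZMod (p ^ r)) + ((jj + ii * p ^ L : ℕ) : ZMod (p ^ r)) * (q : ZMod (p ^ r)) * w * (p : ZMod (p ^ r)) ^ (r - ℓ)) = 0 := by
    intro jj ii hAu
    apply MulChar.map_nonunit
    rw [hUnit, not_not]
    have hAu' : φ (A (jj : ℤ)) = 0 := by rwa [hUnit, not_not] at hAu
    rw [hA] at hAu'
    simp only [map_add, map_mul, hφX, mul_zero, zero_mul, add_zero] at hAu' ⊢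
    have hv1 : φ ((m : ZMod (p ^ r)) - ((jj : ℤ) : ZMod (p ^ r)) * (p : ZMod (p ^ r)) ^ (r - ℓ)) *
        φ (((m : ZMod (p ^ r)) - ((jj : ℤ) : ZMod (p ^ r)) * (p : ZMod (p ^ r)) ^ (r - ℓ))⁻¹) = 1 := by
      rw [← map_mul, ZMod.mul_inv_of_unit _ (hunit _), map_one]
    rcases mul_eq_zero.mp hAu' with h | h
    · exact h
    · rw [h, mul_zero] at hv1
      exact absurd hv1 zero_ne_one
  -- geometric quantities
  set c : ℕ → ℂ := fun jj => χ (1 + C (jj : ℤ) * (p : ZMod (p ^ r)) ^ s) with hcdef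
  have hsq : ∀ jj : ℕ, (C (jj : ℤ) * (p : ZMod (p ^ r)) ^ s) ^ 2 = 0 := by
    intro jj
    have : ((p : ZMod (p ^ r)) ^ s) ^ 2 = 0 := by
      rw [← pow_mul]
      exact hzero _ (by omega)
    rw [mul_pow, this, mul_zero]
  have hcpow : ∀ jj k : ℕ, (c jj) ^ k = χ (1 + C (jj : ℤ) * (k : ZMod (p ^ r)) * (p : ZMod (p ^ r)) ^ s) := by
    intro jj k
    rw [hcdef, ← map_pow, one_add_sq_zero_pow _ (hsq jj)]
    ring_nf
  have hcL : ∀ jj : ℕ, (c jj) ^ (p ^ L) = 1 := by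
    intro jj
    rw [hcpow]
    have h0 : (p : ZMod (p ^ r)) ^ L * (p : ZMod (p ^ r)) ^ s = 0 := by
      rw [← pow_add]
      exact hzero _ (by omega)
    push_cast
    rw [mul_assoc, h0, mul_zero, add_zero, map_one]
  -- divisibility from c = 1
  have hdvd : ∀ jj : ℕ, c jj = 1 → ((p : ℤ) ^ L) ∣ (b (jj : ℤ) * ((C (jj : ℤ)).val : ℤ)) := by
    intro jj hc1
    have h1 : (c jj) ^ (p ^ d) = 1 := by rw [hc1, one_pow]
    rw [hcpow] at h1
    have harg : (1 : ZMod (p ^ r)) + C (jj : ℤ) * ((p ^ d : ℕ) : ZMod (p ^ r)) * (p : ZMod (p ^ r)) ^ s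
        = 1 + C (jj : ℤ) * (((1 : ℤ) : ℤ) : ZMod (p ^ r)) * (p : ZMod (p ^ r)) ^ (2 * (r - ℓ)) := by
      push_cast
      rw [mul_one, mul_assoc, ← pow_add, show d + s = 2 * (r - ℓ) by omega]
    rw [harg, hb (jj : ℤ) 1] at h1
    rw [Complex.exp_eq_one_iff] at h1
    obtain ⟨k, hk⟩ := h1
    have hpne : ((p ^ (ℓ / 2) : ℕ) : ℂ) ≠ 0 :=
      Nat.cast_ne_zero.mpr (pow_ne_zero _ hp.pos.ne')
    have h2πI : (2 * (π : ℂ) * Complex.I) ≠ 0 := Complex.two_pi_I_ne_zero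
    rw [div_eq_iff hpne] at hk
    have h2 : ((b (jj : ℤ)) : ℂ) * ((C (jj : ℤ)).val : ℂ)
        = (k : ℂ) * ((p ^ (ℓ / 2) : ℕ) : ℂ) := by
      apply mul_left_cancel₀ h2πI
      linear_combination hk
    refine ⟨k, ?_⟩
    have h3 : ((b (jj : ℤ) * ((C (jj : ℤ)).val : ℤ) : ℤ) : ℂ)
        = (((p : ℤ) ^ L * k : ℤ) : ℂ) := by
      rw [hL2] at h2
      push_cast at h2 ⊢
      linear_combination h2
    exact_mod_cast h3
  -- norm-one facts
  have hstar : ∀ y : ZMod (p ^ r), IsUnit y → star (χ y) * χ y = 1 := by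
    intro y hy
    have h1 : ‖χ y‖ = 1 := by
      have h2 := DirichletCharacter.unit_norm_eq_one χ hy.unit
      rwa [IsUnit.unit_spec] at h2
    rw [Complex.star_def, mul_comm, Complex.mul_conj, Complex.normSq_eq_norm_sq,
      h1]
    norm_num
  have hχAabs : ∀ j : ℕ, IsUnit (A (j : ℤ)) → ‖χ (A (j : ℤ))‖ = 1 := by
    intro j hj
    have h2 := DirichletCharacter.unit_norm_eq_one χ hj.unit
    rwa [IsUnit.unit_spec] at h2
  have hsplit : p ^ ℓ = p ^ L * p ^ L := by rw [← pow_add]; congr 1; omega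
  have hco : ∀ j i : ℕ, Nat.Coprime (j + i * p ^ L) p ↔ Nat.Coprime j p := by
    intro j i
    rw [show i * p ^ L = (i * p ^ (L - 1)) * p by rw [mul_assoc, ← pow_succ]; congr 2; omega]
    exact Nat.coprime_add_mul_right_left j p _
  -- the inner sum
  have hkey : ∀ j : ℕ,
      (∑ i ∈ Finset.range (p ^ L),
        if Nat.Coprime (j + i * p ^ L) p then
          star (χ ((m : ZMod (p ^ r)) - ((j + i * p ^ L : ℕ) : ZMod (p ^ r)) * (p : ZMod (p ^ r)) ^ (r - ℓ))) *
            χ ((m' : ZMod (p ^ r)) + ((j + i * p ^ L : ℕ) : ZMod (p ^ r)) * (q : ZMod (p ^ r)) * w * (p : ZMod (p ^ r)) ^ (r - ℓ))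
        else 0)
      = if Nat.Coprime j p ∧ IsUnit (A (j : ℤ)) ∧ c j = 1
          then ((p ^ L : ℕ) : ℂ) * χ (A (j : ℤ)) else 0 := by
    intro j
    by_cases hcop : Nat.Coprime j p
    · simp only [hco, eq_true hcop, if_true, true_and]
      by_cases hAu : IsUnit (A (j : ℤ))
      · have hT : ∀ i : ℕ,
            star (χ ((m : ZMod (p ^ r)) - ((j + i * p ^ L : ℕ) : ZMod (p ^ r)) * (p : ZMod (p ^ r)) ^ (r - ℓ))) *
              χ ((m' : ZMod (p ^ r)) + ((j + i * p ^ L : ℕ) : ZMod (p ^ r)) * (q : ZMod (p ^ r)) * w * (p : ZMod (p ^ r)) ^ (r - ℓ))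
            = χ (A (j : ℤ)) * (c j) ^ i := by
          intro i
          rw [halg j i hAu, map_mul, ← mul_assoc, hstar _ (hunit _), one_mul, map_mul, hcpow]
        rw [Finset.sum_congr rfl fun i _ => hT i, ← Finset.mul_sum]
        by_cases hc1 : c j = 1
        · rw [if_pos ⟨hAu, hc1⟩]
          simp only [hc1, one_pow, Finset.sum_const, Finset.card_range, nsmul_eq_mul, mul_one]
          push_cast
          ring
        · rw [geom_sum_eq hc1, hcL j, if_neg (by tauto)]
          simp
      · have hT0 : ∀ i : ℕ,
            star (χ ((m : ZMod (p ^ r)) - ((j + i * p ^ L : ℕ) : ZMod (p ^ r)) * (p : ZMod (p ^ r)) ^ (r - ℓ))) *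
              χ ((m' : ZMod (p ^ r)) + ((j + i * p ^ L : ℕ) : ZMod (p ^ r)) * (q : ZMod (p ^ r)) * w * (p : ZMod (p ^ r)) ^ (r - ℓ))
            = 0 := by
          intro i
          rw [hnonunit j i hAu, mul_zero]
        rw [Finset.sum_congr rfl fun i _ => hT0 i, Finset.sum_const_zero,
          if_neg (by tauto)]
    · simp only [hco, eq_false hcop, if_false, Finset.sum_const_zero, false_and]
  -- rewrite the full sum
  have hLHS : (∑ α ∈ (Finset.range (p ^ ℓ)).filter (fun α => Nat.Coprime α p),
        star (χ ((m : ZMod (p ^ r)) - (α : ZMod (p ^ r)) * (p : ZMod (p ^ r)) ^ (r - ℓ))) *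
          χ ((m' : ZMod (p ^ r)) + (α : ZMod (p ^ r)) * (q : ZMod (p ^ r)) * w * (p : ZMod (p ^ r)) ^ (r - ℓ)))
      = ∑ j ∈ Finset.range (p ^ L),
          (if Nat.Coprime j p ∧ IsUnit (A (j : ℤ)) ∧ c j = 1
            then ((p ^ L : ℕ) : ℂ) * χ (A (j : ℤ)) else 0) := by
    rw [Finset.sum_filter, hsplit, sum_range_mul_split _ _ (pow_pos hp.pos L)]
    exact Finset.sum_congr rfl fun j _ => hkey j
  rw [hL2, hLHS]
  have hpoint : ∀ j ∈ Finset.range (p ^ L),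
      ‖(if Nat.Coprime j p ∧ IsUnit (A (j : ℤ)) ∧ c j = 1
          then ((p ^ L : ℕ) : ℂ) * χ (A (j : ℤ)) else 0)‖
      ≤ (if IsUnit (A (j : ℤ)) ∧ ((p : ℤ) ^ L) ∣ (b (j : ℤ) * ((C (j : ℤ)).val : ℤ))
          then ((p ^ L : ℕ) : ℝ) else 0) := by
    intro j _
    by_cases h3 : Nat.Coprime j p ∧ IsUnit (A (j : ℤ)) ∧ c j = 1
    · rw [if_pos h3, norm_mul, Complex.norm_natCast, hχAabs j h3.2.1, mul_one,
        if_pos ⟨h3.2.1, hdvd j h3.2.2⟩]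
    · rw [if_neg h3, norm_zero]
      split_ifs
      · positivity
      · exact le_refl 0
  calc ‖(∑ j ∈ Finset.range (p ^ L),
        (if Nat.Coprime j p ∧ IsUnit (A (j : ℤ)) ∧ c j = 1
          then ((p ^ L : ℕ) : ℂ) * χ (A (j : ℤ)) else 0))‖
      ≤ ∑ j ∈ Finset.range (p ^ L),
          ‖(if Nat.Coprime j p ∧ IsUnit (A (j : ℤ)) ∧ c j = 1
            then ((p ^ L : ℕ) : ℂ) * χ (A (j : ℤ)) else 0)‖ := norm_sum_le _ _
    _ ≤ ∑ j ∈ Finset.range (p ^ L),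
          (if IsUnit (A (j : ℤ)) ∧ ((p : ℤ) ^ L) ∣ (b (j : ℤ) * ((C (j : ℤ)).val : ℤ))
            then ((p ^ L : ℕ) : ℝ) else 0) := Finset.sum_le_sum hpoint
    _ ≤ ((p ^ L : ℕ) : ℝ) *
          ((Finset.range (p ^ L)).filter (fun α₂ : ℕ =>
            IsUnit (A (α₂ : ℤ)) ∧ ((p : ℤ) ^ L) ∣ (b (α₂ : ℤ) * ((C (α₂ : ℤ)).val : ℤ)))).card := by
        rw [← Finset.sum_filter, Finset.sum_const, nsmul_eq_mul]
        rw [mul_comm]
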